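/- Let E be a separably closed field of characteristic p and M a finite-dimensional étale Φ-module over E. Then the map φ − 1: M → M is surjective, i.e., H^1 of the complex 0 → M →^{φ−1} M → 0 vanishes. -/

import Mathlib

open Polynomial Finset

/-- Auxiliary polynomial sequence for the Artin–Schreier style equation. -/
noncomputable def phiAuxP {E : Type} [Field E] (p : ℕ) (c : ℕ → E) : ℕ → Polynomial E
  | 0 => C (c 0) * X ^ p - 1
  | (i+1) => (phiAuxP p c i) ^ p + C (c (i+1)) * X ^ p

lemma phiAuxP_derivative {E : Type} [Field E] {p : ℕ} [CharP E p]
    (c : ℕ → E) (i : ℕ) : derivative (phiAuxP p c i) = 0 := by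
  induction i with
  | zero =>
      simp [phiAuxP, derivative_X_pow, CharP.cast_eq_zero]
  | succ i ih =>
      simp [phiAuxP, derivative_pow, derivative_X_pow, CharP.cast_eq_zero, ih]

/-- Core lemma: a vector satisfying a recurrence under iterates of `φ` is in the
image of `φ - 1`. -/
lemma phi_core {p : ℕ} [Fact p.Prime] {E : Type} [Field E] [CharP E p] [IsSepClosed E]
    {M : Type} [AddCommGroup M] [Module E M]
    (φ : M → M) (hadd : ∀ x y, φ (x + y) = φ x + φ y)
    (hsemi : ∀ (c : E) (x : M), φ (c • x) = c ^ p • φ x)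
    (y : M) (n : ℕ) (hn : 0 < n) (c : ℕ → E)
    (hrel : φ^[n] y = ∑ i ∈ Finset.range n, c i • φ^[i] y) :
    ∃ x, φ x - x = y := by
  have hp : p ≠ 0 := (Fact.out : p.Prime).ne_zero
  -- the separable polynomial whose root gives the solution
  set R : Polynomial E := phiAuxP p c (n - 1) - X with hR
  have hderiv : derivative R = -1 := by
    simp [hR, phiAuxP_derivative]
  have hdeg : R.degree ≠ 0 := by
    intro h
    have : R = C (R.coeff 0) := eq_C_of_degree_le_zero (le_of_eq h)
    rw [this] at hderiv
    simp at hderiv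
  have hsep : R.Separable := by
    rw [Polynomial.Separable, hderiv]
    exact ⟨0, -1, by ring⟩
  obtain ⟨t, ht⟩ := IsSepClosed.exists_root R hdeg hsep
  -- the coefficients of the solution
  set a : ℕ → E := fun i => (phiAuxP p c i).eval t with ha
  have ha0 : a 0 = c 0 * t ^ p - 1 := by simp [ha, phiAuxP]
  have hasucc : ∀ i, a (i + 1) = (a i) ^ p + c (i + 1) * t ^ p := by
    intro i; simp [ha, phiAuxP]
  have hat : a (n - 1) = t := by
    have := ht
    simp only [IsRoot, hR, eval_sub, eval_X, sub_eq_zero] at this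
    exact this
  set x : M := ∑ i ∈ Finset.range n, a i • φ^[i] y with hx
  refine ⟨x, ?_⟩
  have hφ0 : φ 0 = 0 := by
    have := hsemi 0 0
    simpa [zero_pow hp] using this
  let ψ : M →+ M := AddMonoidHom.mk' φ hadd
  have hφx : φ x = ∑ i ∈ Finset.range n, (a i) ^ p • φ^[i + 1] y := by
    have : φ x = ψ x := rfl
    rw [this, hx, map_sum]
    refine Finset.sum_congr rfl fun i _ => ?_
    show φ (a i • φ^[i] y) = _
    rw [hsemi, ← Function.iterate_succ_apply' φ i y]
  -- coefficient bookkeeping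
  have key : ∑ i ∈ Finset.range n, (a i - t ^ p * c i + if i = 0 then 1 else 0) • φ^[i] y
      = ∑ i ∈ Finset.range (n - 1), (a i) ^ p • φ^[i + 1] y := by
    obtain ⟨m, rfl⟩ : ∃ m, n = m + 1 := ⟨n - 1, (Nat.succ_pred_eq_of_pos hn).symm⟩
    rw [Finset.sum_range_succ' (fun i => (a i - t ^ p * c i + if i = 0 then 1 else 0) • φ^[i] y) m]
    have h0 : (a 0 - t ^ p * c 0 + if (0:ℕ) = 0 then (1:E) else 0) • φ^[0] y = 0 := by
      rw [ha0]; simp [mul_comm]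
    rw [h0, add_zero]
    simp only [Nat.add_sub_cancel]
    refine Finset.sum_congr rfl fun i _ => ?_
    have : a (i + 1) - t ^ p * c (i + 1) + (if i + 1 = 0 then (1:E) else 0) = (a i) ^ p := by
      rw [hasucc i]; simp [mul_comm]
    rw [this]
  have hsum : φ x = x + y := by
    rw [hφx]
    obtain ⟨m, hm⟩ : ∃ m, n = m + 1 := ⟨n - 1, (Nat.succ_pred_eq_of_pos hn).symm⟩
    calc ∑ i ∈ Finset.range n, (a i) ^ p • φ^[i + 1] y
        = (∑ i ∈ Finset.range (n - 1), (a i) ^ p • φ^[i + 1] y) + (a (n-1)) ^ p • φ^[n] y := by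
          rw [hm]; simp only [Nat.add_sub_cancel]
          rw [Finset.sum_range_succ]
      _ = (∑ i ∈ Finset.range n, (a i - t ^ p * c i + if i = 0 then 1 else 0) • φ^[i] y)
            + ∑ i ∈ Finset.range n, (t ^ p * c i) • φ^[i] y := by
          rw [key, hat, hrel, Finset.smul_sum]
          congr 1
          refine Finset.sum_congr rfl fun i _ => ?_
          rw [smul_smul]
      _ = ∑ i ∈ Finset.range n, ((a i + if i = 0 then 1 else 0)) • φ^[i] y := by
          rw [← Finset.sum_add_distrib]
          refine Finset.sum_congr rfl fun i _ => ?_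
          rw [← add_smul]; ring_nf
      _ = x + ∑ i ∈ Finset.range n, (if i = 0 then (1:E) else 0) • φ^[i] y := by
          rw [hx, ← Finset.sum_add_distrib]
          refine Finset.sum_congr rfl fun i _ => ?_
          rw [← add_smul]
      _ = x + y := by
          congr 1
          rw [Finset.sum_eq_single 0]
          · simp
          · intro b _ hb; simp [hb]
          · intro h; exact absurd (Finset.mem_range.2 hn) h
  rw [hsum]; abel

theorem etale_phi_module_sub_one_surjective_of_isSepClosed {p : ℕ} [Fact p.Prime]
    (E : Type) [Field E] [CharP E p] [IsSepClosed E]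
    (M : Type) [AddCommGroup M] [Module E M] [FiniteDimensional E M]
    (φ : M → M)
    (hadd : ∀ x y, φ (x + y) = φ x + φ y)
    (hsemi : ∀ (c : E) (x : M), φ (c • x) = c ^ p • φ x)
    (hetale : Submodule.span E (Set.range φ) = ⊤) :
    Function.Surjective (fun x => φ x - x) := by
  classical
  have hp : p ≠ 0 := (Fact.out : p.Prime).ne_zero
  have hφ0 : φ 0 = 0 := by
    have := hsemi 0 0
    simpa [zero_pow hp] using this
  intro y
  by_cases hy : y = 0
  · exact ⟨0, by simp [hy, hφ0]⟩
  -- find a linear dependence among the iterates of φ on y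
  set d := Module.finrank E M with hd
  set v : Fin (d + 1) → M := fun i => φ^[(i : ℕ)] y with hv
  have hdep : ¬ LinearIndependent E v := by
    intro h
    have := h.fintype_card_le_finrank
    simp [Fintype.card_fin] at this
    omega
  obtain ⟨g, hg0, i0, hi0⟩ := Fintype.not_linearIndependent_iff.mp hdep
  set S : Finset (Fin (d + 1)) := Finset.univ.filter (fun i => g i ≠ 0) with hS
  have hSne : S.Nonempty := ⟨i0, by simp [hS, hi0]⟩
  set m : Fin (d + 1) := S.max' hSne with hm
  have hmS : m ∈ S := S.max'_mem hSne
  have hgm : g m ≠ 0 := by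
    have := hmS
    rw [hS, Finset.mem_filter] at this
    exact this.2
  have hle : ∀ i ∈ S, i ≤ m := fun i hi => S.le_max' i hi
  have hsumS : ∑ i ∈ S, g i • v i = 0 := by
    rw [← hg0]
    exact (Finset.sum_subset (Finset.subset_univ S) (fun i _ hi => by
      have : g i = 0 := by
        by_contra h
        exact hi (by simp [hS, h])
      show g i • v i = 0
      rw [this, zero_smul]))
  have hvm : v m = ∑ i ∈ S.erase m, (-(g m)⁻¹ * g i) • v i := by
    have h1 : g m • v m + ∑ i ∈ S.erase m, g i • v i = 0 := by
      rw [Finset.add_sum_erase S (fun i => g i • v i) hmS]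
      exact hsumS
    have h2 : g m • v m = -(∑ i ∈ S.erase m, g i • v i) :=
      eq_neg_of_add_eq_zero_left h1
    calc v m = (g m)⁻¹ • (g m • v m) := by rw [smul_smul, inv_mul_cancel₀ hgm, one_smul]
      _ = (g m)⁻¹ • (-(∑ i ∈ S.erase m, g i • v i)) := by rw [h2]
      _ = ∑ i ∈ S.erase m, (-(g m)⁻¹ * g i) • v i := by
          rw [smul_neg, Finset.smul_sum, ← Finset.sum_neg_distrib]
          refine Finset.sum_congr rfl fun i _ => ?_
          rw [smul_smul, ← neg_smul, neg_mul]
  have hmpos : 0 < (m : ℕ) := by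
    rcases Nat.eq_zero_or_pos (m : ℕ) with h | h
    · exfalso
      apply hy
      have hm0 : m = 0 := Fin.ext h
      have hE : S.erase m = ∅ := by
        rw [Finset.eq_empty_iff_forall_notMem]
        intro i hi
        have h1 := Finset.ne_of_mem_erase hi
        have h2 := hle i (Finset.mem_of_mem_erase hi)
        exact h1 (le_antisymm h2 (by rw [hm0]; exact Fin.zero_le i))
      have hvm0 : v m = 0 := by rw [hvm, hE, Finset.sum_empty]
      simpa [hv, hm0] using hvm0
    · exact h
  -- membership in span of earlier iterates
  set nn : ℕ := (m : ℕ) with hnn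
  have hmem : φ^[nn] y ∈ Submodule.span E (Set.range (fun i : Fin nn => φ^[(i : ℕ)] y)) := by
    have : v m = φ^[nn] y := rfl
    rw [← this, hvm]
    refine Submodule.sum_mem _ fun i hi => ?_
    refine Submodule.smul_mem _ _ (Submodule.subset_span ?_)
    have h1 := Finset.ne_of_mem_erase hi
    have h2 := hle i (Finset.mem_of_mem_erase hi)
    have hilt : (i : ℕ) < nn := by
      rcases lt_or_eq_of_le h2 with h | h
      · exact h
      · exact absurd h h1
    exact ⟨⟨(i : ℕ), hilt⟩, rfl⟩
  rw [Submodule.mem_span_range_iff_exists_fun] at hmem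
  obtain ⟨cf, hcf⟩ := hmem
  set cc : ℕ → E := fun j => if h : j < nn then cf ⟨j, h⟩ else 0 with hcc
  have hrel : φ^[nn] y = ∑ i ∈ Finset.range nn, cc i • φ^[i] y := by
    rw [← hcf, ← Fin.sum_univ_eq_sum_range (fun i => cc i • φ^[i] y) nn]
    refine Finset.sum_congr rfl fun i _ => ?_
    simp [hcc, i.isLt]
  obtain ⟨x, hx⟩ := phi_core φ hadd hsemi y nn hmpos cc hrel
  exact ⟨x, hx⟩
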